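/- arXiv:2205.02261 — 3 statements merged into one kernel-verified Lean document; each statement's English description precedes it below -/
import Mathlib

section
/- Let d be a positive integer, k ≥ 1, G a set of d×d unitary matrices, and S an ℝ-linear subspace of the Hermitian d×d matrices that is closed under conjugation by G (i.e., VσV† ∈ S for all V ∈ G, σ ∈ S). Let ρ ∈ S, and let A be a Hermitian d×d matrix that is Hilbert–Schmidt orthogonal to S, i.e., Tr[σA] = 0 for every σ ∈ S. Then for every d^{k-1}×d^{k-1} complex matrix B and every V ∈ G, Tr[(VρV†)^{⊗k} (A ⊗ B)] = 0. Consequently, for any finite family (A_m, B_m) with each A_m Hermitian and orthogonal to S, the model h(ρ) = Tr[ρ^{⊗k} Σ_m c_m (A_m ⊗ B_m)] (c_m ∈ ℝ) is G-invariant and identically zero on S. (Proposition 2, with the Lie-algebraic hypotheses 'ρ ∈ i𝔤 and A ∈ i𝔤^⊥ for the Lie algebra 𝔤 of the Lie group G' encoded by the conjugation-invariant subspace S = i𝔤 and the orthogonality condition.) -/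
open Matrix Kronecker

/-- The `k`-fold Kronecker (tensor) power of a `d × d` matrix, as a matrix indexed by
`Fin k → Fin d` (i.e. a `d^k × d^k` matrix). -/
noncomputable def tensorPow {d : ℕ} (k : ℕ) (M : Matrix (Fin d) (Fin d) ℂ) :
    Matrix (Fin k → Fin d) (Fin k → Fin d) ℂ :=
  fun i j => ∏ t : Fin k, M (i t) (j t)

lemma key_trace {d k : ℕ} (X A : Matrix (Fin d) (Fin d) ℂ)
    (B : Matrix (Fin k → Fin d) (Fin k → Fin d) ℂ)
    (hXA : (X * A).trace = 0) :
    ((X ⊗ₖ tensorPow k X) * (A ⊗ₖ B)).trace = 0 := by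
  rw [← Matrix.mul_kronecker_mul, Matrix.trace_kronecker, hXA, zero_mul]

/-- **Proposition 2.** Let `G` be a set of `d × d` unitary matrices and `S` an ℝ-linear
subspace of the Hermitian matrices that is closed under conjugation by `G`.  Let `ρ ∈ S`
and let `A` be Hermitian and Hilbert–Schmidt orthogonal to `S`.  Then for every matrix `B`
on the remaining `k` tensor factors (the model acts on `k + 1 ≥ 1` copies) and every
`V ∈ G`, `Tr[(VρV†)^{⊗(k+1)} (A ⊗ B)] = 0`; and for any finite family `(Aₘ, Bₘ)` with
each `Aₘ` Hermitian and orthogonal to `S`, the model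
`h(σ) = Tr[σ^{⊗(k+1)} Σₘ cₘ (Aₘ ⊗ Bₘ)]` is `G`-invariant and identically zero on `S`.
Here `σ^{⊗(k+1)}` is realized as `σ ⊗ σ^{⊗k}` with the first factor split off. -/
theorem stmt_1 {d k : ℕ} (hd : 0 < d)
    (G : Set (Matrix (Fin d) (Fin d) ℂ))
    (hG : ∀ V ∈ G, Vᴴ * V = 1 ∧ V * Vᴴ = 1)
    (S : Submodule ℝ (Matrix (Fin d) (Fin d) ℂ))
    (hSherm : ∀ σ ∈ S, σᴴ = σ)
    (hSclosed : ∀ V ∈ G, ∀ σ ∈ S, V * σ * Vᴴ ∈ S)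
    (ρ : Matrix (Fin d) (Fin d) ℂ) (hρ : ρ ∈ S)
    (A : Matrix (Fin d) (Fin d) ℂ) (hA : Aᴴ = A)
    (hAorth : ∀ σ ∈ S, (σ * A).trace = 0) :
    (∀ (B : Matrix (Fin k → Fin d) (Fin k → Fin d) ℂ), ∀ V ∈ G,
        (((V * ρ * Vᴴ) ⊗ₖ tensorPow k (V * ρ * Vᴴ)) * (A ⊗ₖ B)).trace = 0) ∧
    (∀ (N : ℕ) (c : Fin N → ℝ)
        (As : Fin N → Matrix (Fin d) (Fin d) ℂ)
        (Bs : Fin N → Matrix (Fin k → Fin d) (Fin k → Fin d) ℂ),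
        (∀ m, (As m)ᴴ = As m) →
        (∀ m, ∀ σ ∈ S, (σ * As m).trace = 0) →
        ∀ σ ∈ S, ∀ V ∈ G,
          (((V * σ * Vᴴ) ⊗ₖ tensorPow k (V * σ * Vᴴ)) *
              (∑ m, (c m : ℂ) • (As m ⊗ₖ Bs m))).trace
            = ((σ ⊗ₖ tensorPow k σ) * (∑ m, (c m : ℂ) • (As m ⊗ₖ Bs m))).trace ∧
          ((σ ⊗ₖ tensorPow k σ) * (∑ m, (c m : ℂ) • (As m ⊗ₖ Bs m))).trace = 0) := by

  have key : ∀ X ∈ S, ∀ (Ai : Matrix (Fin d) (Fin d) ℂ),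
      (∀ σ ∈ S, (σ * Ai).trace = 0) →
      ∀ (B : Matrix (Fin k → Fin d) (Fin k → Fin d) ℂ),
      ((X ⊗ₖ tensorPow k X) * (Ai ⊗ₖ B)).trace = 0 := by
    intro X hX Ai hAi B
    exact key_trace X Ai B (hAi X hX)
  constructor
  · intro B V hV
    exact key _ (hSclosed V hV ρ hρ) A hAorth B
  · intro N c As Bs hAsherm hAsorth σ hσ V hV
    have h1 : ∀ (X : Matrix (Fin d) (Fin d) ℂ), X ∈ S →
        (((X ⊗ₖ tensorPow k X)) * (∑ m, (c m : ℂ) • (As m ⊗ₖ Bs m))).trace = 0 := by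
      intro X hX
      rw [Finset.mul_sum, Matrix.trace_sum]
      refine Finset.sum_eq_zero fun m _ => ?_
      rw [Matrix.mul_smul, Matrix.trace_smul, key X hX (As m) (hAsorth m) (Bs m), smul_zero]
    have h2 := h1 _ (hSclosed V hV σ hσ)
    have h3 := h1 σ hσ
    exact ⟨by rw [h2, h3], h3⟩
end

section
/- Let n ≥ 1, d = 2ⁿ, and identify (ℂ²)^{⊗n} with ℂ^d. Let O be a d×d complex matrix such that Tr[(V₁⊗⋯⊗Vₙ) ρ (V₁⊗⋯⊗Vₙ)† O] = Tr[ρO] for every density matrix ρ and every n-tuple (V₁,…,Vₙ) of 2×2 unitary matrices. Then O = (Tr[O]/d)·𝟙, and the resulting model is the constant function ρ ↦ Tr[O]/d on density matrices; in particular no such model can provide any information distinguishing entangled from separable pure states. (Theorem 6: no local-unitary-invariant conventional-experiment model can classify the multipartite entanglement dataset.) -/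
open Matrix ComplexOrder

/-- The Kronecker product `V₁ ⊗ ⋯ ⊗ Vₙ` of an `n`-tuple of `2 × 2` matrices, as a
`2ⁿ × 2ⁿ` matrix on `(ℂ²)^{⊗n}` (indexed by `Fin n → Fin 2`). -/
noncomputable def localTensor {n : ℕ} (Vs : Fin n → Matrix (Fin 2) (Fin 2) ℂ) :
    Matrix (Fin n → Fin 2) (Fin n → Fin 2) ℂ :=
  fun i j => ∏ t : Fin n, Vs t (i t) (j t)

section AuxLemmas

lemma aux_conj_vmv {ι : Type*} [Fintype ι] (M : Matrix ι ι ℂ) (v : ι → ℂ) :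
    M * vecMulVec v (star v) * Mᴴ = vecMulVec (M *ᵥ v) (star (M *ᵥ v)) := by
  ext a b
  simp only [mul_apply, vecMulVec_apply, conjTranspose_apply, mulVec, dotProduct,
    Pi.star_apply, star_sum, star_mul', Finset.sum_mul, Finset.mul_sum]
  exact Finset.sum_congr rfl fun q _ => Finset.sum_congr rfl fun p _ => by ring

lemma aux_trace_vmv {ι : Type*} [Fintype ι] (v : ι → ℂ) (B : Matrix ι ι ℂ) :
    (vecMulVec v (star v) * B).trace = star v ⬝ᵥ (B *ᵥ v) := by
  simp only [trace, diag_apply, mul_apply, vecMulVec_apply, dotProduct, mulVec, Pi.star_apply,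
    Finset.mul_sum]
  rw [Finset.sum_comm]
  exact Finset.sum_congr rfl fun q _ => Finset.sum_congr rfl fun p _ => by ring

lemma aux_psd0 {ι : Type*} [Fintype ι] [DecidableEq ι] (v : ι → ℂ) :
    (vecMulVec v (star v)).PosSemidef := by
  rw [vecMulVec_eq (Fin 1), ← conjTranspose_replicateCol]
  exact posSemidef_self_mul_conjTranspose _

lemma aux_psd_smul {ι : Type*} [Fintype ι] [DecidableEq ι] {M : Matrix ι ι ℂ}
    (hM : M.PosSemidef) (r : ℝ) (hr : 0 ≤ r) : ((r : ℂ) • M).PosSemidef := by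
  constructor
  · ext a b
    simp only [conjTranspose_apply, Matrix.smul_apply, smul_eq_mul, star_mul',
      RCLike.star_def, Complex.conj_ofReal]
    rw [← hM.1.apply a b]
    simp [conjTranspose_apply, mul_comm, RCLike.star_def]
  · intro x
    exact (hM.smul (Complex.zero_le_real.mpr hr)).2 x

lemma aux_star_single {ι : Type*} [DecidableEq ι] (i : ι) :
    star (Pi.single i 1 : ι → ℂ) = Pi.single i 1 := by
  have h := Pi.single_star (f := fun _ : ι => ℂ) i 1
  rw [star_one] at h
  exact h.symm

lemma aux_trace_single {ι : Type*} [Fintype ι] [DecidableEq ι] (k : ι) (B : Matrix ι ι ℂ) :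
    (vecMulVec (Pi.single k 1 : ι → ℂ) (star (Pi.single k 1 : ι → ℂ)) * B).trace = B k k := by
  rw [aux_trace_vmv, aux_star_single, mulVec_single_one, single_dotProduct, one_mul,
    col_apply]

lemma aux_dot {ι : Type*} [Fintype ι] [DecidableEq ι] (i j : ι) (α β : ℂ)
    (B : Matrix ι ι ℂ) :
    star (α • (Pi.single i 1 : ι → ℂ) + β • (Pi.single j 1 : ι → ℂ)) ⬝ᵥ
      (B *ᵥ (α • (Pi.single i 1 : ι → ℂ) + β • (Pi.single j 1 : ι → ℂ)))
    = star α * α * B i i + star α * β * B i j + star β * α * B j i + star β * β * B j j := by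
  rw [star_add, star_smul, star_smul, aux_star_single, aux_star_single, mulVec_add,
    mulVec_smul, mulVec_smul]
  simp only [add_dotProduct, dotProduct_add, smul_dotProduct, dotProduct_smul,
    single_dotProduct, one_mul, smul_eq_mul, Pi.smul_apply, mulVec_single_one]
  simp [Pi.single_apply]
  ring

def flipFn {n : ℕ} (i j a : Fin n → Fin 2) : Fin n → Fin 2 :=
  fun t => if i t = j t then a t else a t + 1

lemma flipFn_i {n : ℕ} (i j : Fin n → Fin 2) : flipFn i j i = j := by
  funext t
  by_cases h : i t = j t
  · simpa [flipFn, h] using h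
  · simp only [flipFn, h, if_neg]
    revert h; generalize i t = x; generalize j t = y
    fin_cases x <;> fin_cases y <;> decide

lemma aux_flip_apply {n : ℕ} (i j a b : Fin n → Fin 2) :
    localTensor (fun t => if i t = j t then (1 : Matrix (Fin 2) (Fin 2) ℂ) else !![0,1;1,0]) a b
    = if a = flipFn i j b then 1 else 0 := by
  have key : ∀ t : Fin n,
      (if i t = j t then (1 : Matrix (Fin 2) (Fin 2) ℂ) else !![0,1;1,0]) (a t) (b t)
      = if a t = flipFn i j b t then 1 else 0 := by
    intro t
    by_cases h : i t = j t
    · simp [flipFn, h, Matrix.one_apply]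
    · simp only [flipFn, h, if_neg, if_false]
      generalize a t = x; generalize b t = y
      fin_cases x <;> fin_cases y <;> simp
  unfold localTensor
  rw [Finset.prod_congr rfl fun t _ => key t]
  by_cases h : a = flipFn i j b
  · simp [h]
  · obtain ⟨t, ht⟩ := Function.ne_iff.1 h
    rw [if_neg h]
    exact Finset.prod_eq_zero (Finset.mem_univ t) (by simp [ht])

lemma aux_flip_unitary : ((!![0,1;1,0] : Matrix (Fin 2) (Fin 2) ℂ))ᴴ * !![0,1;1,0] = 1 ∧
    (!![0,1;1,0] : Matrix (Fin 2) (Fin 2) ℂ) * (!![0,1;1,0])ᴴ = 1 := by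
  constructor <;>
    · ext x y
      fin_cases x <;> fin_cases y <;>
        simp [Matrix.mul_apply, Fin.sum_univ_two, Matrix.one_apply, conjTranspose_apply]

lemma aux_phase_apply {n : ℕ} (t0 : Fin n) (a b : Fin n → Fin 2) :
    localTensor (fun t => if t = t0 then (!![1,0;0,-1] : Matrix (Fin 2) (Fin 2) ℂ) else 1) a b
    = if a = b then (if a t0 = 0 then 1 else -1) else 0 := by
  by_cases h : a = b
  · subst h
    rw [if_pos rfl]
    unfold localTensor
    rw [Finset.prod_eq_single t0 (fun t _ ht => by simp [ht, Matrix.one_apply])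
      (fun ht => absurd (Finset.mem_univ t0) ht)]
    have h1 : (fun t => if t = t0 then (!![1,0;0,-1] : Matrix (Fin 2) (Fin 2) ℂ) else 1) t0
        = !![1,0;0,-1] := by simp
    rw [h1]
    generalize a t0 = x
    fin_cases x <;> simp
  · obtain ⟨t, ht⟩ := Function.ne_iff.1 h
    rw [if_neg h]
    unfold localTensor
    refine Finset.prod_eq_zero (Finset.mem_univ t) ?_
    by_cases h2 : t = t0
    · have h1 : (fun u => if u = t0 then (!![1,0;0,-1] : Matrix (Fin 2) (Fin 2) ℂ) else 1) t
          = !![1,0;0,-1] := by simp [h2]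
      rw [h1]
      revert ht; generalize a t = x; generalize b t = y
      fin_cases x <;> fin_cases y <;> simp
    · simp [h2, Matrix.one_apply, ht]

lemma aux_phase_unitary : ((!![1,0;0,-1] : Matrix (Fin 2) (Fin 2) ℂ))ᴴ * !![1,0;0,-1] = 1 ∧
    (!![1,0;0,-1] : Matrix (Fin 2) (Fin 2) ℂ) * (!![1,0;0,-1])ᴴ = 1 := by
  constructor <;>
    · ext x y
      fin_cases x <;> fin_cases y <;>
        simp [Matrix.mul_apply, Fin.sum_univ_two, Matrix.one_apply, conjTranspose_apply]

end AuxLemmas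

/-- **Theorem 6.** Let `n ≥ 1`, `d = 2ⁿ`.  If `O` satisfies
`Tr[(V₁⊗⋯⊗Vₙ) ρ (V₁⊗⋯⊗Vₙ)† O] = Tr[ρ O]` for every density matrix `ρ` and every tuple
of `2 × 2` unitaries, then `O = (Tr[O]/d)·𝟙`, and the model is the constant
`ρ ↦ Tr[O]/d` on density matrices: no local-unitary-invariant conventional-experiment
model can classify the multipartite entanglement dataset. -/
theorem stmt_12 {n : ℕ} (hn : 1 ≤ n)
    (O : Matrix (Fin n → Fin 2) (Fin n → Fin 2) ℂ)
    (hO : ∀ (ρ : Matrix (Fin n → Fin 2) (Fin n → Fin 2) ℂ)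
        (Vs : Fin n → Matrix (Fin 2) (Fin 2) ℂ),
      (ρ.PosSemidef ∧ ρ.trace = 1) →
      (∀ t, (Vs t)ᴴ * Vs t = 1 ∧ Vs t * (Vs t)ᴴ = 1) →
      (localTensor Vs * ρ * (localTensor Vs)ᴴ * O).trace = (ρ * O).trace) :
    O = (O.trace / (2 ^ n : ℂ)) • (1 : Matrix (Fin n → Fin 2) (Fin n → Fin 2) ℂ) ∧
    ∀ ρ : Matrix (Fin n → Fin 2) (Fin n → Fin 2) ℂ,
      (ρ.PosSemidef ∧ ρ.trace = 1) → (ρ * O).trace = O.trace / (2 ^ n : ℂ) := by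
  classical
  -- Step 1: all diagonal entries are equal
  have hdiag : ∀ i j : Fin n → Fin 2, O i i = O j j := by
    intro i j
    have hU : ∀ t, ((fun t => if i t = j t then (1 : Matrix (Fin 2) (Fin 2) ℂ)
          else !![0,1;1,0]) t)ᴴ * (fun t => if i t = j t then (1 : Matrix (Fin 2) (Fin 2) ℂ)
          else !![0,1;1,0]) t = 1 ∧
        (fun t => if i t = j t then (1 : Matrix (Fin 2) (Fin 2) ℂ) else !![0,1;1,0]) t *
          ((fun t => if i t = j t then (1 : Matrix (Fin 2) (Fin 2) ℂ) else !![0,1;1,0]) t)ᴴ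
          = 1 := by
      intro t
      by_cases h : i t = j t
      · simp [h]
      · simpa [h] using aux_flip_unitary
    have hρ : (vecMulVec (Pi.single i 1 : (Fin n → Fin 2) → ℂ)
          (star (Pi.single i 1 : (Fin n → Fin 2) → ℂ))).PosSemidef ∧
        (vecMulVec (Pi.single i 1 : (Fin n → Fin 2) → ℂ)
          (star (Pi.single i 1 : (Fin n → Fin 2) → ℂ))).trace = 1 := by
      refine ⟨aux_psd0 _, ?_⟩
      have h := aux_trace_single i (1 : Matrix (Fin n → Fin 2) (Fin n → Fin 2) ℂ)
      rw [mul_one] at h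
      rw [h, Matrix.one_apply_eq]
    have hmain := hO _ _ hρ hU
    have hmv : localTensor (fun t => if i t = j t then (1 : Matrix (Fin 2) (Fin 2) ℂ)
        else !![0,1;1,0]) *ᵥ (Pi.single i 1 : (Fin n → Fin 2) → ℂ) = Pi.single j 1 := by
      rw [mulVec_single_one]
      funext a
      rw [col_apply, aux_flip_apply i j a i, flipFn_i]
      simp [Pi.single_apply]
    rw [aux_conj_vmv, hmv, aux_trace_single, aux_trace_single] at hmain
    exact hmain.symm
  -- Step 2: all off-diagonal entries vanish
  have hoff : ∀ i j : Fin n → Fin 2, i ≠ j → O i j = 0 := by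
    intro i j hij
    obtain ⟨t0, ht0⟩ := Function.ne_iff.1 hij
    have key : ∀ c : ℂ, star c * c = 1 → c * O i j + star c * O j i = 0 := by
      intro c hc
      set w : (Fin n → Fin 2) → ℂ :=
        (1:ℂ) • (Pi.single i 1 : (Fin n → Fin 2) → ℂ) +
          c • (Pi.single j 1 : (Fin n → Fin 2) → ℂ) with hw
      have htrw : (vecMulVec w (star w)).trace = 2 := by
        rw [show (vecMulVec w (star w)).trace = (vecMulVec w (star w) * 1).trace by
          rw [mul_one], aux_trace_vmv, hw, aux_dot]
        have hc' : (starRingEnd ℂ) c * c = 1 := hc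
        simp [Matrix.one_apply, hij, hij.symm]
        linear_combination hc'
      have hpsd : ((1/2 : ℂ) • vecMulVec w (star w)).PosSemidef := by
        have h12 : (1/2 : ℂ) = (((1/2 : ℝ) : ℂ)) := by norm_num
        rw [h12]
        exact aux_psd_smul (aux_psd0 w) _ (by norm_num)
      have htrρ : ((1/2 : ℂ) • vecMulVec w (star w)).trace = 1 := by
        rw [trace_smul, htrw, smul_eq_mul]
        norm_num
      have hU : ∀ t, ((fun t => if t = t0 then (!![1,0;0,-1] : Matrix (Fin 2) (Fin 2) ℂ)
            else 1) t)ᴴ * (fun t => if t = t0 then (!![1,0;0,-1] : Matrix (Fin 2) (Fin 2) ℂ)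
            else 1) t = 1 ∧
          (fun t => if t = t0 then (!![1,0;0,-1] : Matrix (Fin 2) (Fin 2) ℂ) else 1) t *
            ((fun t => if t = t0 then (!![1,0;0,-1] : Matrix (Fin 2) (Fin 2) ℂ) else 1) t)ᴴ
            = 1 := by
        intro t
        by_cases h : t = t0
        · simpa [h] using aux_phase_unitary
        · simp [h]
      have hmain := hO _ _ ⟨hpsd, htrρ⟩ hU
      set di : ℂ := if i t0 = (0 : Fin 2) then 1 else -1 with hdi
      set dj : ℂ := if j t0 = (0 : Fin 2) then 1 else -1 with hdj
      have hsingle : ∀ (k : Fin n → Fin 2) (dk : ℂ), (dk = if k t0 = (0 : Fin 2) then 1 else -1) →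
          localTensor (fun t => if t = t0 then (!![1,0;0,-1] : Matrix (Fin 2) (Fin 2) ℂ)
            else 1) *ᵥ (Pi.single k 1 : (Fin n → Fin 2) → ℂ)
          = dk • (Pi.single k 1 : (Fin n → Fin 2) → ℂ) := by
        intro k dk hdk
        rw [mulVec_single_one]
        funext a
        rw [col_apply, aux_phase_apply]
        by_cases h : a = k
        · subst h
          simp [hdk]
        · simp [h, Pi.single_eq_of_ne h]
      have hmv : localTensor (fun t => if t = t0 then (!![1,0;0,-1] : Matrix (Fin 2) (Fin 2) ℂ)
            else 1) *ᵥ w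
          = di • (Pi.single i 1 : (Fin n → Fin 2) → ℂ) +
            (c * dj) • (Pi.single j 1 : (Fin n → Fin 2) → ℂ) := by
        rw [hw, mulVec_add, mulVec_smul, mulVec_smul, hsingle i di hdi, hsingle j dj hdj,
          one_smul, smul_smul]
      rw [mul_smul_comm, smul_mul_assoc, aux_conj_vmv, hmv] at hmain
      rw [smul_mul_assoc, trace_smul, smul_mul_assoc, trace_smul, aux_trace_vmv,
        aux_dot] at hmain
      rw [show (vecMulVec w (star w) * O).trace = star w ⬝ᵥ (O *ᵥ w) from aux_trace_vmv w O,
        hw, aux_dot] at hmain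
      rcases em (i t0 = 0) with h0 | h0
      · have h1 : ¬ (j t0 = 0) := fun hh => ht0 (h0.trans hh.symm)
        rw [hdi, if_pos h0, hdj, if_neg h1] at hmain
        simp only [star_one, one_mul, mul_one, star_mul', star_neg, mul_neg, neg_mul,
          smul_eq_mul] at hmain
        linear_combination -hmain
      · have h1 : j t0 = 0 := by
          revert h0 ht0; generalize i t0 = x; generalize j t0 = y
          fin_cases x <;> fin_cases y <;> decide
        rw [hdi, if_neg h0, hdj, if_pos h1] at hmain
        simp only [star_one, one_mul, mul_one, star_mul', star_neg, mul_neg, neg_mul,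
          smul_eq_mul] at hmain
        linear_combination -hmain
    have k1 := key 1 (by simp)
    have k2 := key Complex.I (by simp)
    rw [star_one, one_mul, one_mul] at k1
    have hstarI : star Complex.I = -Complex.I := Complex.conj_I
    rw [hstarI] at k2
    have h3 : Complex.I * (O i j - O j i) = 0 := by linear_combination k2
    have h4 : O i j = O j i := by
      rcases mul_eq_zero.mp h3 with h | h
      · exact absurd h Complex.I_ne_zero
      · exact sub_eq_zero.mp h
    linear_combination k1 / 2 + h4 / 2
  -- Step 3: assemble
  have hcard : (Fintype.card (Fin n → Fin 2) : ℂ) = 2 ^ n := by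
    simp [Fintype.card_fun]
  have htr : O.trace = 2 ^ n * O (fun _ => 0) (fun _ => 0) := by
    rw [trace]
    rw [Finset.sum_congr rfl fun a _ => (show O.diag a = O (fun _ => 0) (fun _ => 0) from
      hdiag a (fun _ => 0))]
    rw [Finset.sum_const, Finset.card_univ, nsmul_eq_mul, hcard]
  have h2n : (2 ^ n : ℂ) ≠ 0 := pow_ne_zero _ two_ne_zero
  have hc0 : O.trace / (2 ^ n : ℂ) = O (fun _ => 0) (fun _ => 0) := by
    rw [htr]; field_simp
  have hO1 : O = O (fun _ => 0) (fun _ => 0) • (1 : Matrix (Fin n → Fin 2) (Fin n → Fin 2) ℂ) := by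
    ext a b
    by_cases h : a = b
    · subst h
      simp [Matrix.one_apply_eq, hdiag a (fun _ => 0)]
    · simp [Matrix.one_apply_ne h, hoff a b h]
  constructor
  · rw [hc0]; exact hO1
  · intro ρ ⟨hpsd, htrρ⟩
    rw [hc0]
    conv_lhs => rw [hO1]
    rw [mul_smul_comm, mul_one, trace_smul, htrρ, smul_eq_mul, mul_one]
end

section
/- Let n ≥ 1, d = 2ⁿ, and let ρ be an n-qubit density matrix on (ℂ²)^{⊗n}. For a subset α ⊆ {1,…,n}, let ρ_α denote the reduced density matrix of ρ on the qubits in α (with the convention Tr[ρ_∅²] = 1), and for j ∈ {1,…,n} let SWAP^{(j)} denote the operator on ((ℂ²)^{⊗n})^{⊗2} that swaps the j-th qubit of the first copy with the j-th qubit of the second copy. Then for every subset Q ⊆ {1,…,n}: Tr[(ρ ⊗ ρ)(𝟙 − 2^{−|Q|} ⊗_{j∈Q}(𝟙₄^{(j)} + SWAP^{(j)}))] = 1 − 2^{−|Q|} Σ_{α⊆Q} Tr[ρ_α²], using Tr[(ρ⊗ρ)·⊗_{j∈α}SWAP^{(j)}] = Tr[ρ_α²] and the expansion ⊗_{j∈Q}(𝟙₄^{(j)}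 + SWAP^{(j)}) = Σ_{α⊆Q} ⊗_{j∈α}SWAP^{(j)}. (Theorem 7, Concentratable Entanglement case: the local-unitary-invariant model recovering the Concentratable Entanglement family of multipartite entanglement measures.) -/
open Matrix Kronecker ComplexOrder

/-- The reduced density matrix of an `n`-qubit state `ρ` on the qubits in `α`,
obtained by tracing out all qubits not in `α`. -/
noncomputable def reducedState {n : ℕ} (ρ : Matrix (Fin n → Fin 2) (Fin n → Fin 2) ℂ)
    (α : Finset (Fin n)) :
    Matrix ({j : Fin n // j ∈ α} → Fin 2) ({j : Fin n // j ∈ α} → Fin 2) ℂ :=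
  fun u u' => ∑ v : {j : Fin n // j ∉ α} → Fin 2,
    ρ (fun j => if h : j ∈ α then u ⟨j, h⟩ else v ⟨j, h⟩)
      (fun j => if h : j ∈ α then u' ⟨j, h⟩ else v ⟨j, h⟩)

/-- The operator `⊗_{j∈α} SWAP^{(j)}` on two copies of `(ℂ²)^{⊗n}`: it exchanges the
`j`-th qubit of the first copy with the `j`-th qubit of the second copy for each
`j ∈ α`, acting as the identity elsewhere. -/
def swapQubits {n : ℕ} (α : Finset (Fin n)) :
    Matrix ((Fin n → Fin 2) × (Fin n → Fin 2)) ((Fin n → Fin 2) × (Fin n → Fin 2)) ℂ :=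
  fun p q =>
    if (∀ j, p.1 j = if j ∈ α then q.2 j else q.1 j) ∧
       (∀ j, p.2 j = if j ∈ α then q.1 j else q.2 j) then 1 else 0

/-- Splitting a function on `Fin n` according to membership in `α`. -/
def splitEquiv {n : ℕ} (α : Finset (Fin n)) :
    (Fin n → Fin 2) ≃ (({j : Fin n // j ∈ α} → Fin 2) × ({j : Fin n // j ∉ α} → Fin 2)) where
  toFun f := (fun j => f j, fun j => f j)
  invFun p j := if h : j ∈ α then p.1 ⟨j, h⟩ else p.2 ⟨j, h⟩
  left_inv f := by funext j; by_cases h : j ∈ α <;> simp [h]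
  right_inv p := by
    ext j
    · simp [j.2]
    · simp [j.2]

lemma swap_trace_key {n : ℕ} (ρ : Matrix (Fin n → Fin 2) (Fin n → Fin 2) ℂ)
    (α : Finset (Fin n)) :
    ((ρ ⊗ₖ ρ) * swapQubits α).trace
      = (reducedState ρ α * reducedState ρ α).trace := by
  classical
  have hiff : ∀ (x y : Fin n → Fin 2) (q : (Fin n → Fin 2) × (Fin n → Fin 2)),
      ((∀ j, q.1 j = if j ∈ α then y j else x j) ∧
       (∀ j, q.2 j = if j ∈ α then x j else y j)) ↔
      q = (fun j => if j ∈ α then y j else x j, fun j => if j ∈ α then x j else y j) := by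
    intro x y q
    rw [Prod.ext_iff]
    simp [funext_iff]
  have L : ((ρ ⊗ₖ ρ) * swapQubits α).trace
      = ∑ x : Fin n → Fin 2, ∑ y : Fin n → Fin 2,
          ρ x (fun j => if j ∈ α then y j else x j)
            * ρ y (fun j => if j ∈ α then x j else y j) := by
    rw [Matrix.trace]
    simp only [Matrix.diag, Matrix.mul_apply, Fintype.sum_prod_type, swapQubits,
      Matrix.kroneckerMap_apply, hiff, mul_ite, mul_one, mul_zero]
    simp [ite_and, Finset.sum_ite_eq']
  have R : (reducedState ρ α * reducedState ρ α).trace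
      = ∑ u : {j : Fin n // j ∈ α} → Fin 2, ∑ u' : {j : Fin n // j ∈ α} → Fin 2,
        ∑ v : {j : Fin n // j ∉ α} → Fin 2, ∑ w : {j : Fin n // j ∉ α} → Fin 2,
          ρ ((splitEquiv α).symm (u, v)) ((splitEquiv α).symm (u', v))
            * ρ ((splitEquiv α).symm (u', w)) ((splitEquiv α).symm (u, w)) := by
    rw [Matrix.trace]
    simp only [Matrix.diag, Matrix.mul_apply, reducedState, Finset.sum_mul_sum]
    rfl
  rw [L, R]
  rw [← Equiv.sum_comp (splitEquiv α).symm
    (fun x => ∑ y : Fin n → Fin 2,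
      ρ x (fun j => if j ∈ α then y j else x j) * ρ y (fun j => if j ∈ α then x j else y j))]
  rw [Fintype.sum_prod_type]
  refine Finset.sum_congr rfl fun u _ => ?_
  rw [Finset.sum_comm]
  rw [← Equiv.sum_comp (splitEquiv α).symm
    (fun y => ∑ v : {j : Fin n // j ∉ α} → Fin 2,
      ρ ((splitEquiv α).symm (u, v)) (fun j => if j ∈ α then y j else (splitEquiv α).symm (u, v) j)
      * ρ y (fun j => if j ∈ α then (splitEquiv α).symm (u, v) j else y j))]
  rw [Fintype.sum_prod_type]
  refine Finset.sum_congr rfl fun u' _ => ?_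
  rw [Finset.sum_comm]
  refine Finset.sum_congr rfl fun v _ => Finset.sum_congr rfl fun w _ => ?_
  have h1 : (fun j => if j ∈ α then (splitEquiv α).symm (u', w) j
        else (splitEquiv α).symm (u, v) j) = (splitEquiv α).symm (u', v) := by
    funext j; by_cases h : j ∈ α <;> simp [splitEquiv, h]
  have h2 : (fun j => if j ∈ α then (splitEquiv α).symm (u, v) j
        else (splitEquiv α).symm (u', w) j) = (splitEquiv α).symm (u, w) := by
    funext j; by_cases h : j ∈ α <;> simp [splitEquiv, h]
  rw [h1, h2]

/-- **Theorem 7 (Concentratable Entanglement case).** For an `n`-qubit density matrix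
`ρ` and any `Q ⊆ {1,…,n}`:
`Tr[(ρ⊗ρ)·⊗_{j∈α}SWAP^{(j)}] = Tr[ρ_α²]` for every `α`, and
`Tr[(ρ ⊗ ρ)(𝟙 − 2^{−|Q|} ⊗_{j∈Q}(𝟙₄^{(j)} + SWAP^{(j)}))]
  = 1 − 2^{−|Q|} Σ_{α⊆Q} Tr[ρ_α²]`,
using the expansion `⊗_{j∈Q}(𝟙₄^{(j)} + SWAP^{(j)}) = Σ_{α⊆Q} ⊗_{j∈α}SWAP^{(j)}`. -/
theorem stmt_15 {n : ℕ} (hn : 1 ≤ n)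
    (ρ : Matrix (Fin n → Fin 2) (Fin n → Fin 2) ℂ)
    (hρ : ρ.PosSemidef ∧ ρ.trace = 1) (Q : Finset (Fin n)) :
    (∀ α : Finset (Fin n),
      ((ρ ⊗ₖ ρ) * swapQubits α).trace
        = (reducedState ρ α * reducedState ρ α).trace) ∧
    ((ρ ⊗ₖ ρ) *
        ((1 : Matrix ((Fin n → Fin 2) × (Fin n → Fin 2))
            ((Fin n → Fin 2) × (Fin n → Fin 2)) ℂ)
          - ((2 : ℂ) ^ Q.card)⁻¹ • ∑ α ∈ Q.powerset, swapQubits α)).trace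
      = 1 - ((2 : ℂ) ^ Q.card)⁻¹ *
          ∑ α ∈ Q.powerset, (reducedState ρ α * reducedState ρ α).trace := by
  refine ⟨swap_trace_key ρ, ?_⟩
  simp only [Matrix.mul_sub, Matrix.mul_one, Matrix.mul_smul, Matrix.mul_sum,
    Matrix.trace_sub, Matrix.trace_smul, Matrix.trace_sum, swap_trace_key ρ,
    Matrix.trace_kronecker, hρ.2, one_mul, smul_eq_mul]
end
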